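/- Let K be a number field with ring of integers O_K, k > 0, ε ∈ O_K^× a unit of infinite order with |ι(ε)|_j ≠ 1 for every 1 ≤ j ≤ r₁+r₂, and let T₁,…,T_t be compact subsets of the mixed space E. Suppose: (1) there exist β₁,…,β_t ∈ O_K such that for every 1 ≤ j ≤ t and every ξ ∈ T_j, either there exists γ ∈ O_K with N(ι(ε)·ξ − ι(β_j) − ι(γ)) < k, or ι(ε)·ξ − ι(β_j) ∈ T_{j+1} (indices mod t, with T_{t+1} = T₁); and (2) for every j there is an index π(j) such that for every ξ ∈ T_j there exists γ ∈ O_K with either N(ι(ε)⁻¹·ξ − ι(γ) − ι(δ)) < k for some δ ∈ O_K, or ι(ε)⁻¹·ξ − ι(γ) ∈ T_{π(j)}. Then every k-exceptional point of T₁ equals ζ = ι(β)/(ι(ε)ᵗ − 1), where β = ε^{t−1}β₁ + ε^{t−2}β₂ + ⋯ + εβ_{t−1} + β_t ∈ O_K; moreover for every j, every k-exceptional point of T_j lies in the set {ι(ε)ᵐ·ζ − ι(γ) : m ∈ ℤ, γ ∈ O_K}. -/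

import Mathlib

set_option linter.unusedSectionVars false

open NumberField NumberField.InfinitePlace NumberField.mixedEmbedding Finset

open scoped Classical

namespace CasselsAux

open Fin.NatCast Fin.CommRing

variable {K : Type*} [Field K] [NumberField K]

/-- Index type for "place functionals". -/
abbrev PF (K : Type*) [Field K] [NumberField K] :=
  {w : InfinitePlace K // IsReal w} ⊕ {w : InfinitePlace K // IsComplex w}

noncomputable def pf : PF K → (mixedSpace K →+* ℂ)
  | .inl w => Complex.ofRealHom.comp ((Pi.evalRingHom _ w).comp (RingHom.fst _ _))
  | .inr w => (Pi.evalRingHom _ w).comp (RingHom.snd _ _)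

lemma pf_inl (w : {w : InfinitePlace K // IsReal w}) (x : mixedSpace K) :
    pf (.inl w) x = ((x.1 w : ℝ) : ℂ) := rfl

lemma pf_inr (w : {w : InfinitePlace K // IsComplex w}) (x : mixedSpace K) :
    pf (.inr w) x = x.2 w := rfl

lemma pf_norm_le (p : PF K) (x : mixedSpace K) : ‖pf p x‖ ≤ ‖x‖ := by
  cases p with
  | inl w =>
      rw [pf_inl, Complex.norm_real]
      exact le_trans (norm_le_pi_norm x.1 w) (norm_fst_le x)
  | inr w =>
      rw [pf_inr]
      exact le_trans (norm_le_pi_norm x.2 w) (norm_snd_le x)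

lemma pf_ext {x y : mixedSpace K} (h : ∀ p : PF K, pf p x = pf p y) : x = y := by
  refine Prod.ext ?_ ?_
  · funext w
    have := h (.inl w)
    rw [pf_inl, pf_inl] at this
    exact_mod_cast this
  · funext w
    have := h (.inr w)
    rwa [pf_inr, pf_inr] at this

lemma pf_div (p : PF K) (x y : mixedSpace K) : pf p (x / y) = pf p x / pf p y := by
  cases p with
  | inl w => simp [pf_inl, Prod.fst_div, Pi.div_apply]
  | inr w => simp [pf_inr, Prod.snd_div, Pi.div_apply]

lemma pf_normAtPlace_real {w : InfinitePlace K} (hw : IsReal w) (x : mixedSpace K) :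
    normAtPlace w x = ‖pf (.inl ⟨w, hw⟩) x‖ := by
  rw [normAtPlace_apply_of_isReal hw, pf_inl, Complex.norm_real]

lemma pf_normAtPlace_complex {w : InfinitePlace K} (hw : IsComplex w) (x : mixedSpace K) :
    normAtPlace w x = ‖pf (.inr ⟨w, hw⟩) x‖ := by
  rw [normAtPlace_apply_of_isComplex hw, pf_inr]

lemma pf_comp_injective (p : PF K) :
    Function.Injective (fun ξ : 𝓞 K => pf p (mixedEmbedding K (ξ : K))) := by
  have h1 : Function.Injective ((pf p).comp (mixedEmbedding K)) := RingHom.injective _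
  have h2 : Function.Injective (fun ξ : 𝓞 K => (ξ : K)) :=
    NumberField.RingOfIntegers.coe_injective
  exact fun a b hab => h2 (h1 hab)


section Main

variable (k : ℝ) (ε : (𝓞 K)ˣ) {t : ℕ} [NeZero t]
  (T : Fin t → Set (mixedSpace K)) (β : Fin t → 𝓞 K) (π : Fin t → Fin t)

/-- `k`-exceptional points. -/
def Exc (x : mixedSpace K) : Prop :=
  ∀ γ : 𝓞 K, k ≤ mixedEmbedding.norm (x - mixedEmbedding K (γ : K))

lemma exc_affine {x : mixedSpace K} (hx : Exc k x) (u : (𝓞 K)ˣ) (α : 𝓞 K) :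
    Exc k (mixedEmbedding K ((u : 𝓞 K) : K) * x - mixedEmbedding K (α : K)) := by
  intro γ
  have key : mixedEmbedding K ((u : 𝓞 K) : K) * x - mixedEmbedding K (α : K)
      - mixedEmbedding K (γ : K)
      = mixedEmbedding K ((u : 𝓞 K) : K) *
        (x - mixedEmbedding K ((((u⁻¹ : (𝓞 K)ˣ) : 𝓞 K) * (α + γ) : 𝓞 K) : K)) := by
    rw [mul_sub, ← map_mul]
    have : ((u : 𝓞 K) : K) * ((((u⁻¹ : (𝓞 K)ˣ) : 𝓞 K) * (α + γ) : 𝓞 K) : K)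
        = ((α : 𝓞 K) : K) + ((γ : 𝓞 K) : K) := by
      have h𝓞 : (u : 𝓞 K) * (((u⁻¹ : (𝓞 K)ˣ) : 𝓞 K) * (α + γ)) = α + γ :=
        u.mul_inv_cancel_left (α + γ)
      calc ((u : 𝓞 K) : K) * ((((u⁻¹ : (𝓞 K)ˣ) : 𝓞 K) * (α + γ) : 𝓞 K) : K)
          = (((u : 𝓞 K) * (((u⁻¹ : (𝓞 K)ˣ) : 𝓞 K) * (α + γ)) : 𝓞 K) : K) := by push_cast; ring
        _ = ((α : 𝓞 K) : K) + ((γ : 𝓞 K) : K) := by rw [h𝓞]; push_cast; ring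
    rw [this, map_add]
    ring
  rw [key, map_mul]
  have hnu : mixedEmbedding.norm (mixedEmbedding K ((u : 𝓞 K) : K)) = 1 := norm_unit u
  rw [hnu, one_mul]
  exact hx _

lemma fstep (h1 : ∀ (j : Fin t), ∀ ξ ∈ T j,
      (∃ γ : 𝓞 K, mixedEmbedding.norm
          (mixedEmbedding K (ε : K) * ξ - mixedEmbedding K (β j : K)
            - mixedEmbedding K (γ : K)) < k) ∨
      mixedEmbedding K (ε : K) * ξ - mixedEmbedding K (β j : K) ∈ T (j + 1))
    {j : Fin t} {x : mixedSpace K} (hx : x ∈ T j) (he : Exc k x) :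
    (mixedEmbedding K (ε : K) * x - mixedEmbedding K (β j : K) ∈ T (j + 1)) ∧
      Exc k (mixedEmbedding K (ε : K) * x - mixedEmbedding K (β j : K)) := by
  have he' := exc_affine k he ε (β j)
  rcases h1 j x hx with ⟨γ, hγ⟩ | hm
  · exact absurd (he' γ) (not_le.mpr hγ)
  · exact ⟨hm, he'⟩

/-- Accumulated translation for the forward orbit. -/
def csum (j : Fin t) (n : ℕ) : 𝓞 K :=
  ∑ i ∈ Finset.range n, (ε : 𝓞 K) ^ (n - 1 - i) * β (j + (i : Fin t))

lemma csum_zero (j : Fin t) : csum ε β j 0 = 0 := by simp [csum]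

lemma csum_succ (j : Fin t) (n : ℕ) :
    csum ε β j (n + 1) = (ε : 𝓞 K) * csum ε β j n + β (j + (n : Fin t)) := by
  rw [csum, Finset.sum_range_succ, csum, Finset.mul_sum]
  congr 1
  · refine Finset.sum_congr rfl fun i hi => ?_
    rw [Finset.mem_range] at hi
    rw [← mul_assoc, ← pow_succ']
    congr 2
    omega
  · norm_num

/-- Forward orbit point. -/
noncomputable def fpt (x : mixedSpace K) (j : Fin t) (n : ℕ) : mixedSpace K :=
  mixedEmbedding K (ε : K) ^ n * x - mixedEmbedding K ((csum ε β j n : 𝓞 K) : K)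

lemma fpt_zero (x : mixedSpace K) (j : Fin t) : fpt ε β x j 0 = x := by
  simp [fpt, csum_zero]

lemma fpt_succ (x : mixedSpace K) (j : Fin t) (n : ℕ) :
    fpt ε β x j (n + 1) = mixedEmbedding K (ε : K) * fpt ε β x j n
      - mixedEmbedding K ((β (j + (n : Fin t)) : 𝓞 K) : K) := by
  rw [fpt, fpt, csum_succ]
  push_cast [map_add, map_mul]
  ring

lemma fpt_mem (h1 : ∀ (j : Fin t), ∀ ξ ∈ T j,
      (∃ γ : 𝓞 K, mixedEmbedding.norm
          (mixedEmbedding K (ε : K) * ξ - mixedEmbedding K (β j : K)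
            - mixedEmbedding K (γ : K)) < k) ∨
      mixedEmbedding K (ε : K) * ξ - mixedEmbedding K (β j : K) ∈ T (j + 1))
    {j : Fin t} {x : mixedSpace K} (hx : x ∈ T j) (he : Exc k x) (n : ℕ) :
    fpt ε β x j n ∈ T (j + (n : Fin t)) ∧ Exc k (fpt ε β x j n) := by
  induction n with
  | zero => simpa [fpt_zero] using ⟨hx, he⟩
  | succ n ih =>
      have h := fstep k ε T β h1 ih.1 ih.2
      rw [← fpt_succ] at h
      have : (j + (n : Fin t)) + 1 = j + ((n + 1 : ℕ) : Fin t) := by push_cast; ring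
      rw [this] at h
      exact h

lemma csum_add (j : Fin t) (n m : ℕ) :
    csum ε β j (n + m) = (ε : 𝓞 K) ^ m * csum ε β j n + csum ε β (j + (n : Fin t)) m := by
  induction m with
  | zero => simp [csum_zero]
  | succ m ih =>
      have h1 : n + (m + 1) = (n + m) + 1 := by ring
      rw [h1, csum_succ, ih, csum_succ]
      have h2 : j + ((n + m : ℕ) : Fin t) = (j + (n : Fin t)) + (m : Fin t) := by
        push_cast; ring
      rw [h2]
      ring

lemma fpt_add (x : mixedSpace K) (j : Fin t) (n m : ℕ) :
    fpt ε β x j (n + m) = mixedEmbedding K (ε : K) ^ m * fpt ε β x j n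
      - mixedEmbedding K ((csum ε β (j + (n : Fin t)) m : 𝓞 K) : K) := by
  rw [fpt, fpt, csum_add]
  push_cast [map_add, map_mul, map_pow]
  ring


lemma geom_fix {F : Type*} [NormedField F] {a b : F} (ha : 1 < ‖a‖) (R : ℝ) (u : ℕ → F)
    (hrec : ∀ m, u (m + 1) = a * u m - b) (hbd : ∀ m, ‖u m‖ ≤ R) :
    u 0 = b / (a - 1) := by
  have ha1 : a - 1 ≠ 0 := by
    intro h
    rw [sub_eq_zero] at h
    rw [h, norm_one] at ha
    exact lt_irrefl _ ha
  set ω : F := b / (a - 1) with hω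
  have hfix : a * ω - b = ω := by
    rw [hω]
    field_simp
    ring
  have key : ∀ m, u m - ω = a ^ m * (u 0 - ω) := by
    intro m
    induction m with
    | zero => simp
    | succ m ih =>
        rw [hrec m, pow_succ]
        calc a * u m - b - ω = a * (u m - ω) + (a * ω - b - ω) := by ring
          _ = a * (u m - ω) := by rw [hfix]; ring
          _ = a ^ m * a * (u 0 - ω) := by rw [ih]; ring
  by_contra hne
  have hpos : 0 < ‖u 0 - ω‖ := by
    rw [norm_pos_iff, sub_ne_zero]
    exact hne
  obtain ⟨m, hm⟩ := pow_unbounded_of_one_lt ((R + ‖ω‖) / ‖u 0 - ω‖) ha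
  have hbound : ‖a‖ ^ m * ‖u 0 - ω‖ ≤ R + ‖ω‖ := by
    have := key m
    have h1 : ‖u m - ω‖ ≤ R + ‖ω‖ :=
      le_trans (norm_sub_le _ _) (add_le_add_left (hbd m) _)
    calc ‖a‖ ^ m * ‖u 0 - ω‖ = ‖a ^ m * (u 0 - ω)‖ := by rw [norm_mul, norm_pow]
      _ = ‖u m - ω‖ := by rw [← this]
      _ ≤ R + ‖ω‖ := h1
  rw [div_lt_iff₀ hpos] at hm
  exact absurd hbound (not_le.mpr hm)

lemma exc_val_of_big {R : ℝ}
    (h1 : ∀ (j : Fin t), ∀ ξ ∈ T j,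
      (∃ γ : 𝓞 K, mixedEmbedding.norm
          (mixedEmbedding K (ε : K) * ξ - mixedEmbedding K (β j : K)
            - mixedEmbedding K (γ : K)) < k) ∨
      mixedEmbedding K (ε : K) * ξ - mixedEmbedding K (β j : K) ∈ T (j + 1))
    (hR : ∀ i : Fin t, ∀ z ∈ T i, ‖z‖ ≤ R)
    (p : PF K) (hp : 1 < ‖pf p (mixedEmbedding K (ε : K))‖)
    {j : Fin t} {x : mixedSpace K} (hx : x ∈ T j) (he : Exc k x) :
    pf p x = pf p (mixedEmbedding K ((csum ε β j t : 𝓞 K) : K)) /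
      ((pf p (mixedEmbedding K (ε : K))) ^ t - 1) := by
  set a : ℂ := pf p (mixedEmbedding K (ε : K)) with hadef
  have hmulcast : ∀ m : ℕ, ((m * t : ℕ) : Fin t) = 0 := by
    intro m
    push_cast [Fin.natCast_self]
    ring
  set u : ℕ → ℂ := fun m => pf p (fpt ε β x j (m * t)) with hu
  have hrec : ∀ m, u (m + 1) = a ^ t * u m - pf p (mixedEmbedding K ((csum ε β j t : 𝓞 K) : K)) := by
    intro m
    have h1' : (m + 1) * t = m * t + t := by ring
    have := fpt_add ε β x j (m * t) t
    rw [hmulcast m, add_zero] at this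
    rw [hu]
    simp only [h1', this, map_sub, map_mul, map_pow]
    rfl
  have hbd : ∀ m, ‖u m‖ ≤ R := by
    intro m
    have hmem := (fpt_mem k ε T β h1 hx he (m * t)).1
    rw [hmulcast m, add_zero] at hmem
    exact le_trans (pf_norm_le p _) (hR j _ hmem)
  have hat : 1 < ‖a ^ t‖ := by
    rw [norm_pow]
    exact one_lt_pow₀ hp (NeZero.ne t)
  have h0 : u 0 = pf p x := by rw [hu]; simp [fpt_zero]
  have := geom_fix hat R u hrec hbd
  rw [h0] at this
  rw [this]

lemma bstep
    (h2 : ∀ (j : Fin t), ∀ ξ ∈ T j, ∃ γ : 𝓞 K,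
      (∃ δ : 𝓞 K, mixedEmbedding.norm
          (mixedEmbedding K ((ε⁻¹ : (𝓞 K)ˣ) : K) * ξ - mixedEmbedding K (γ : K)
            - mixedEmbedding K (δ : K)) < k) ∨
      mixedEmbedding K ((ε⁻¹ : (𝓞 K)ˣ) : K) * ξ - mixedEmbedding K (γ : K) ∈ T (π j))
    {j : Fin t} {x : mixedSpace K} (hx : x ∈ T j) (he : Exc k x) :
    ∃ γ : 𝓞 K,
      (mixedEmbedding K ((ε⁻¹ : (𝓞 K)ˣ) : K) * x - mixedEmbedding K (γ : K) ∈ T (π j)) ∧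
      Exc k (mixedEmbedding K ((ε⁻¹ : (𝓞 K)ˣ) : K) * x - mixedEmbedding K (γ : K)) := by
  obtain ⟨γ, hγ⟩ := h2 j x hx
  have he' := exc_affine k he ε⁻¹ γ
  rcases hγ with ⟨δ, hδ⟩ | hm
  · exact absurd (he' δ) (not_le.mpr hδ)
  · exact ⟨γ, hm, he'⟩


variable (h2 : ∀ (j : Fin t), ∀ ξ ∈ T j, ∃ γ : 𝓞 K,
      (∃ δ : 𝓞 K, mixedEmbedding.norm
          (mixedEmbedding K ((ε⁻¹ : (𝓞 K)ˣ) : K) * ξ - mixedEmbedding K (γ : K)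
            - mixedEmbedding K (δ : K)) < k) ∨
      mixedEmbedding K ((ε⁻¹ : (𝓞 K)ˣ) : K) * ξ - mixedEmbedding K (γ : K) ∈ T (π j))

/-- choice function for the backward step -/
noncomputable def gfun (j : Fin t) (x : mixedSpace K) : 𝓞 K :=
  if h : x ∈ T j ∧ Exc k x then (bstep k ε T π h2 h.1 h.2).choose else 0

/-- one backward step on states -/
noncomputable def bnext : Fin t × mixedSpace K × 𝓞 K → Fin t × mixedSpace K × 𝓞 K :=
  fun s => ⟨π s.1,
    mixedEmbedding K ((ε⁻¹ : (𝓞 K)ˣ) : K) * s.2.1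
      - mixedEmbedding K ((gfun k ε T π h2 s.1 s.2.1 : 𝓞 K) : K),
    ((ε⁻¹ : (𝓞 K)ˣ) : 𝓞 K) * s.2.2 + gfun k ε T π h2 s.1 s.2.1⟩

/-- backward orbit -/
noncomputable def bseq (j₀ : Fin t) (x₀ : mixedSpace K) : ℕ → Fin t × mixedSpace K × 𝓞 K
  | 0 => ⟨j₀, x₀, 0⟩
  | n + 1 => bnext k ε T π h2 (bseq j₀ x₀ n)

lemma bseq_spec {j₀ : Fin t} {x₀ : mixedSpace K} (hx₀ : x₀ ∈ T j₀) (he₀ : Exc k x₀) (n : ℕ) :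
    (bseq k ε T π h2 j₀ x₀ n).2.1 ∈ T (bseq k ε T π h2 j₀ x₀ n).1 ∧
    Exc k (bseq k ε T π h2 j₀ x₀ n).2.1 ∧
    (bseq k ε T π h2 j₀ x₀ n).2.1
      = mixedEmbedding K ((ε⁻¹ : (𝓞 K)ˣ) : K) ^ n * x₀
        - mixedEmbedding K (((bseq k ε T π h2 j₀ x₀ n).2.2 : 𝓞 K) : K) := by
  induction n with
  | zero => simpa [bseq] using ⟨hx₀, he₀⟩
  | succ n ih =>
      obtain ⟨hmem, hexc, heq⟩ := ih
      set s := bseq k ε T π h2 j₀ x₀ n with hs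
      have hg : gfun k ε T π h2 s.1 s.2.1 = (bstep k ε T π h2 hmem hexc).choose := by
        rw [gfun, dif_pos ⟨hmem, hexc⟩]
      have hspec := (bstep k ε T π h2 hmem hexc).choose_spec
      rw [← hg] at hspec
      have hstep : bseq k ε T π h2 j₀ x₀ (n + 1) = bnext k ε T π h2 s := rfl
      refine ⟨?_, ?_, ?_⟩
      · rw [hstep]; exact hspec.1
      · rw [hstep]; exact hspec.2
      · rw [hstep]
        show mixedEmbedding K ((ε⁻¹ : (𝓞 K)ˣ) : K) * s.2.1
            - mixedEmbedding K ((gfun k ε T π h2 s.1 s.2.1 : 𝓞 K) : K)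
          = mixedEmbedding K ((ε⁻¹ : (𝓞 K)ˣ) : K) ^ (n + 1) * x₀
            - mixedEmbedding K ((((ε⁻¹ : (𝓞 K)ˣ) : 𝓞 K) * s.2.2
                + gfun k ε T π h2 s.1 s.2.1 : 𝓞 K) : K)
        rw [heq]
        push_cast [map_add, map_mul]
        ring

lemma exists_big (hne : ∀ p : PF K, ‖pf p (mixedEmbedding K (ε : K))‖ ≠ 1) :
    ∃ p₀ : PF K, 1 < ‖pf p₀ (mixedEmbedding K (ε : K))‖ := by
  by_contra hcon
  push_neg at hcon
  have hlt : ∀ w : InfinitePlace K, normAtPlace w (mixedEmbedding K (ε : K)) < 1 := by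
    intro w
    rcases isReal_or_isComplex w with hw | hw
    · rw [pf_normAtPlace_real hw]
      exact lt_of_le_of_ne (hcon _) (hne _)
    · rw [pf_normAtPlace_complex hw]
      exact lt_of_le_of_ne (hcon _) (hne _)
  have hnorm : mixedEmbedding.norm (mixedEmbedding K (ε : K)) = 1 := norm_unit ε
  rw [mixedEmbedding.norm_apply] at hnorm
  obtain ⟨w₀⟩ := (inferInstance : Nonempty (InfinitePlace K))
  have hfactlt : ∀ w : InfinitePlace K,
      normAtPlace w (mixedEmbedding K (ε : K)) ^ mult w < 1 := fun w =>
    pow_lt_one₀ (normAtPlace_nonneg _ _) (hlt w) mult_ne_zero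
  have hfactle : ∀ w ∈ (Finset.univ.erase w₀),
      normAtPlace w (mixedEmbedding K (ε : K)) ^ mult w ≤ 1 := fun w _ =>
    le_of_lt (hfactlt w)
  have h0 : ∀ w ∈ (Finset.univ.erase w₀),
      (0:ℝ) ≤ normAtPlace w (mixedEmbedding K (ε : K)) ^ mult w := fun w _ =>
    pow_nonneg (normAtPlace_nonneg _ _) _
  have := Finset.mul_prod_erase Finset.univ
    (fun w => normAtPlace w (mixedEmbedding K (ε : K)) ^ mult w) (Finset.mem_univ w₀)
  rw [← this] at hnorm
  have hprodle := Finset.prod_le_one h0 hfactle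
  nlinarith [hfactlt w₀, pow_nonneg (normAtPlace_nonneg w₀ (mixedEmbedding K (ε : K))) (mult w₀),
    Finset.prod_nonneg h0]


include π h2 in
lemma main_val
    (hT : ∀ j, IsCompact (T j))
    (h1 : ∀ (j : Fin t), ∀ ξ ∈ T j,
      (∃ γ : 𝓞 K, mixedEmbedding.norm
          (mixedEmbedding K (ε : K) * ξ - mixedEmbedding K (β j : K)
            - mixedEmbedding K (γ : K)) < k) ∨
      mixedEmbedding K (ε : K) * ξ - mixedEmbedding K (β j : K) ∈ T (j + 1))
    (hne : ∀ p : PF K, ‖pf p (mixedEmbedding K (ε : K))‖ ≠ 1)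
    {x : mixedSpace K} (hx : x ∈ T 0) (he : Exc k x) (p : PF K) :
    pf p x = pf p (mixedEmbedding K ((csum ε β 0 t : 𝓞 K) : K)) /
      ((pf p (mixedEmbedding K (ε : K))) ^ t - 1) := by
  -- a bound on the compact sets
  obtain ⟨R, hR'⟩ := isBounded_iff_forall_norm_le.mp (isCompact_iUnion hT).isBounded
  have hR : ∀ i : Fin t, ∀ z ∈ T i, ‖z‖ ≤ R := fun i z hz =>
    hR' z (Set.mem_iUnion.mpr ⟨i, hz⟩)
  by_cases hbig : 1 < ‖pf p (mixedEmbedding K (ε : K))‖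
  · exact exc_val_of_big k ε T β h1 hR p hbig hx he
  have hsmall : ‖pf p (mixedEmbedding K (ε : K))‖ < 1 :=
    lt_of_le_of_ne (not_lt.mp hbig) (hne p)
  obtain ⟨p₀, hp₀⟩ := exists_big ε hne
  have hKinv : ((ε⁻¹ : (𝓞 K)ˣ) : K) * (ε : K) = 1 := by
    have h𝓞 : ((ε⁻¹ : (𝓞 K)ˣ) : 𝓞 K) * (ε : 𝓞 K) = 1 := ε.inv_mul
    calc ((ε⁻¹ : (𝓞 K)ˣ) : K) * (ε : K)
        = ((((ε⁻¹ : (𝓞 K)ˣ) : 𝓞 K) * (ε : 𝓞 K) : 𝓞 K) : K) := by push_cast; ring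
      _ = 1 := by rw [h𝓞]; push_cast; ring
  have hinvmul : ∀ q : PF K,
      pf q (mixedEmbedding K ((ε⁻¹ : (𝓞 K)ˣ) : K)) * pf q (mixedEmbedding K (ε : K)) = 1 := by
    intro q
    rw [← map_mul, ← map_mul, hKinv, map_one, map_one]
  have ht0 : ((t : ℕ) : Fin t) = 0 := Fin.natCast_self t
  -- the auxiliary second point x'
  have hx'pair := fpt_mem k ε T β h1 hx he t
  rw [ht0, add_zero] at hx'pair
  obtain ⟨x', hx'mem, hx'exc, hx'val⟩ :
      ∃ x', x' ∈ T 0 ∧ Exc k x' ∧ ∀ q : PF K,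
        pf q x' = (pf q (mixedEmbedding K (ε : K))) ^ t * pf q x
          - pf q (mixedEmbedding K ((csum ε β 0 t : 𝓞 K) : K)) :=
    ⟨fpt ε β x 0 t, hx'pair.1, hx'pair.2, fun q => by rw [fpt, map_sub, map_mul, map_pow]⟩
  -- the two backward orbits, abstracted
  obtain ⟨j, d, y, hymem, hyexc, hyval⟩ :
      ∃ (j : ℕ → Fin t) (d : ℕ → 𝓞 K) (y : ℕ → mixedSpace K),
        (∀ n, y n ∈ T (j n)) ∧ (∀ n, Exc k (y n)) ∧
        (∀ n, y n = mixedEmbedding K ((ε⁻¹ : (𝓞 K)ˣ) : K) ^ n * x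
          - mixedEmbedding K ((d n : 𝓞 K) : K)) :=
    ⟨fun n => (bseq k ε T π h2 0 x n).1, fun n => (bseq k ε T π h2 0 x n).2.2,
      fun n => (bseq k ε T π h2 0 x n).2.1,
      fun n => (bseq_spec k ε T π h2 hx he n).1,
      fun n => (bseq_spec k ε T π h2 hx he n).2.1,
      fun n => (bseq_spec k ε T π h2 hx he n).2.2⟩
  obtain ⟨j', d', y', hy'mem, hy'exc, hy'val⟩ :
      ∃ (j' : ℕ → Fin t) (d' : ℕ → 𝓞 K) (y' : ℕ → mixedSpace K),
        (∀ n, y' n ∈ T (j' n)) ∧ (∀ n, Exc k (y' n)) ∧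
        (∀ n, y' n = mixedEmbedding K ((ε⁻¹ : (𝓞 K)ˣ) : K) ^ n * x'
          - mixedEmbedding K ((d' n : 𝓞 K) : K)) :=
    ⟨fun n => (bseq k ε T π h2 0 x' n).1, fun n => (bseq k ε T π h2 0 x' n).2.2,
      fun n => (bseq k ε T π h2 0 x' n).2.1,
      fun n => (bseq_spec k ε T π h2 hx'mem hx'exc n).1,
      fun n => (bseq_spec k ε T π h2 hx'mem hx'exc n).2.1,
      fun n => (bseq_spec k ε T π h2 hx'mem hx'exc n).2.2⟩
  -- values at the big place p₀
  have hat1 : (pf p₀ (mixedEmbedding K (ε : K))) ^ t - 1 ≠ 0 := by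
    intro h
    rw [sub_eq_zero] at h
    have h2' : ‖(pf p₀ (mixedEmbedding K (ε : K))) ^ t‖ = 1 := by rw [h, norm_one]
    rw [norm_pow] at h2'
    have h3' := one_lt_pow₀ hp₀ (NeZero.ne t)
    linarith
  have hWs : ∀ n, pf p₀ (y n)
      = pf p₀ (mixedEmbedding K ((csum ε β (j n) t : 𝓞 K) : K)) /
        ((pf p₀ (mixedEmbedding K (ε : K))) ^ t - 1) := fun n =>
    exc_val_of_big k ε T β h1 hR p₀ hp₀ (hymem n) (hyexc n)
  have hWs' : ∀ n, pf p₀ (y' n)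
      = pf p₀ (mixedEmbedding K ((csum ε β (j' n) t : 𝓞 K) : K)) /
        ((pf p₀ (mixedEmbedding K (ε : K))) ^ t - 1) := fun n =>
    exc_val_of_big k ε T β h1 hR p₀ hp₀ (hy'mem n) (hy'exc n)
  have hX : pf p₀ x
      = pf p₀ (mixedEmbedding K ((csum ε β 0 t : 𝓞 K) : K)) /
        ((pf p₀ (mixedEmbedding K (ε : K))) ^ t - 1) :=
    exc_val_of_big k ε T β h1 hR p₀ hp₀ hx he
  have hX' : pf p₀ x' = pf p₀ x := by
    rw [hx'val p₀, hX]
    field_simp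
    ring
  -- the difference of the translation integers, at the big place
  have hsubcast : ∀ (u v : 𝓞 K),
      mixedEmbedding K ((u - v : 𝓞 K) : K)
        = mixedEmbedding K ((u : 𝓞 K) : K) - mixedEmbedding K ((v : 𝓞 K) : K) := by
    intro u v
    have : ((u - v : 𝓞 K) : K) = (u : K) - (v : K) := by push_cast; ring
    rw [this, map_sub]
  have hμval : ∀ n, pf p₀ (mixedEmbedding K ((d n - d' n : 𝓞 K) : K))
      = pf p₀ (mixedEmbedding K ((csum ε β (j' n) t : 𝓞 K) : K)) /
          ((pf p₀ (mixedEmbedding K (ε : K))) ^ t - 1)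
        - pf p₀ (mixedEmbedding K ((csum ε β (j n) t : 𝓞 K) : K)) /
          ((pf p₀ (mixedEmbedding K (ε : K))) ^ t - 1) := by
    intro n
    have e1 := congrArg (pf p₀) (hyval n)
    have e2 := congrArg (pf p₀) (hy'val n)
    rw [map_sub, map_mul, map_pow, hWs n] at e1
    rw [map_sub, map_mul, map_pow, hWs' n, hX'] at e2
    rw [hsubcast, map_sub]
    linear_combination e1 - e2
  -- pigeonhole on the pair of indices
  obtain ⟨P, hPinf⟩ := Finite.exists_infinite_fiber (fun n => (j n, j' n))
  have hSinf : ((fun n => (j n, j' n)) ⁻¹' {P}).Infinite :=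
    Set.infinite_coe_iff.mp hPinf
  obtain ⟨n₀, hn₀⟩ := hSinf.nonempty
  have hμ : ∀ n ∈ (fun n => (j n, j' n)) ⁻¹' {P}, d n - d' n = d n₀ - d' n₀ := by
    intro n hn
    apply pf_comp_injective p₀
    show pf p₀ (mixedEmbedding K ((d n - d' n : 𝓞 K) : K))
      = pf p₀ (mixedEmbedding K ((d n₀ - d' n₀ : 𝓞 K) : K))
    rw [hμval n, hμval n₀]
    have hPn : (j n, j' n) = P := hn
    have hPn₀ : (j n₀, j' n₀) = P := hn₀
    have h11 : j n = j n₀ := by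
      have := hPn.trans hPn₀.symm
      exact (Prod.ext_iff.mp this).1
    have h22 : j' n = j' n₀ := by
      have := hPn.trans hPn₀.symm
      exact (Prod.ext_iff.mp this).2
    rw [h11, h22]
  -- the small place p : norms
  have hbpa : pf p (mixedEmbedding K ((ε⁻¹ : (𝓞 K)ˣ) : K)) * pf p (mixedEmbedding K (ε : K)) = 1 :=
    hinvmul p
  have ha0 : pf p (mixedEmbedding K (ε : K)) ≠ 0 := by
    intro h
    rw [h, mul_zero] at hbpa
    exact zero_ne_one hbpa
  have hbp1 : 1 < ‖pf p (mixedEmbedding K ((ε⁻¹ : (𝓞 K)ˣ) : K))‖ := by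
    have hnb : ‖pf p (mixedEmbedding K ((ε⁻¹ : (𝓞 K)ˣ) : K))‖ * ‖pf p (mixedEmbedding K (ε : K))‖ = 1 := by
      rw [← norm_mul, hbpa, norm_one]
    have hapos : 0 < ‖pf p (mixedEmbedding K (ε : K))‖ := norm_pos_iff.mpr ha0
    nlinarith
  -- the key bound at the small place
  have hkey : ∀ n ∈ (fun n => (j n, j' n)) ⁻¹' {P},
      ‖pf p (mixedEmbedding K ((ε⁻¹ : (𝓞 K)ˣ) : K))‖ ^ n * ‖pf p x - pf p x'‖
        ≤ R + R + ‖pf p (mixedEmbedding K ((d n₀ - d' n₀ : 𝓞 K) : K))‖ := by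
    intro n hn
    have hdiff : y n - y' n
        = mixedEmbedding K ((ε⁻¹ : (𝓞 K)ˣ) : K) ^ n * (x - x')
          - mixedEmbedding K ((d n₀ - d' n₀ : 𝓞 K) : K) := by
      rw [hyval n, hy'val n, ← hμ n hn, hsubcast]
      ring
    have e := congrArg (pf p) hdiff
    rw [map_sub, map_sub, map_mul, map_pow, map_sub] at e
    have heq2 : pf p (mixedEmbedding K ((ε⁻¹ : (𝓞 K)ˣ) : K)) ^ n * (pf p x - pf p x')
        = (pf p (y n) - pf p (y' n))
          + pf p (mixedEmbedding K ((d n₀ - d' n₀ : 𝓞 K) : K)) := by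
      linear_combination -e
    rw [← norm_pow, ← norm_mul, heq2]
    have hb1 : ‖pf p (y n)‖ ≤ R := le_trans (pf_norm_le p _) (hR _ _ (hymem n))
    have hb2 : ‖pf p (y' n)‖ ≤ R := le_trans (pf_norm_le p _) (hR _ _ (hy'mem n))
    calc ‖_ + _‖ ≤ ‖pf p (y n) - pf p (y' n)‖
          + ‖pf p (mixedEmbedding K ((d n₀ - d' n₀ : 𝓞 K) : K))‖ := norm_add_le _ _
      _ ≤ _ := by
          have := norm_sub_le (pf p (y n)) (pf p (y' n))
          linarith
  -- conclude `pf p x = pf p x'`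
  have hxx' : pf p x = pf p x' := by
    by_contra hne'
    have hdpos : 0 < ‖pf p x - pf p x'‖ := by
      rw [norm_pos_iff, sub_ne_zero]
      exact hne'
    obtain ⟨m₀, hm₀⟩ := pow_unbounded_of_one_lt
      ((R + R + ‖pf p (mixedEmbedding K ((d n₀ - d' n₀ : 𝓞 K) : K))‖) / ‖pf p x - pf p x'‖) hbp1
    obtain ⟨n, hnmem, hnlt⟩ := hSinf.exists_gt m₀
    have hpow : ‖pf p (mixedEmbedding K ((ε⁻¹ : (𝓞 K)ˣ) : K))‖ ^ m₀
        ≤ ‖pf p (mixedEmbedding K ((ε⁻¹ : (𝓞 K)ˣ) : K))‖ ^ n :=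
      pow_le_pow_right₀ (le_of_lt hbp1) (le_of_lt hnlt)
    have hk2 := hkey n hnmem
    rw [div_lt_iff₀ hdpos] at hm₀
    nlinarith
  -- the final formula at the small place
  have hat1' : (pf p (mixedEmbedding K (ε : K))) ^ t - 1 ≠ 0 := by
    intro h
    rw [sub_eq_zero] at h
    have h2' : ‖(pf p (mixedEmbedding K (ε : K))) ^ t‖ = 1 := by rw [h, norm_one]
    rw [norm_pow] at h2'
    have hlt1 : ‖pf p (mixedEmbedding K (ε : K))‖ ^ t < 1 :=
      pow_lt_one₀ (norm_nonneg _) hsmall (NeZero.ne t)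
    linarith
  have h1' := hx'val p
  rw [← hxx'] at h1'
  rw [eq_div_iff hat1']
  linear_combination -h1'


lemma csum_zero_t : csum ε β 0 t = ∑ i : Fin t, (ε : 𝓞 K) ^ (t - 1 - (i : ℕ)) * β i := by
  rw [csum, ← Fin.sum_univ_eq_sum_range (fun i => (ε : 𝓞 K) ^ (t - 1 - i) * β (0 + (i : Fin t))) t]
  refine Finset.sum_congr rfl fun i _ => ?_
  congr 2
  rw [zero_add, Fin.cast_val_eq_self]

end Main
end CasselsAux

open CasselsAux Fin.NatCast Fin.CommRing in
theorem stmt_4 (K : Type*) [Field K] [NumberField K]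
    (k : ℝ) (hk : 0 < k)
    (ε : (𝓞 K)ˣ) (hε : ¬ IsOfFinOrder ε)
    (hεabs : (∀ w : {w : InfinitePlace K // IsReal w},
        |(mixedEmbedding K (ε : K)).1 w| ≠ 1) ∧
      (∀ w : {w : InfinitePlace K // IsComplex w},
        ‖(mixedEmbedding K (ε : K)).2 w‖ ≠ 1))
    (t : ℕ) [NeZero t]
    (T : Fin t → Set (mixedEmbedding.mixedSpace K)) (hT : ∀ j, IsCompact (T j))
    (β : Fin t → 𝓞 K)
    (h1 : ∀ (j : Fin t), ∀ ξ ∈ T j,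
      (∃ γ : 𝓞 K, mixedEmbedding.norm
          (mixedEmbedding K (ε : K) * ξ - mixedEmbedding K (β j : K)
            - mixedEmbedding K (γ : K)) < k) ∨
      mixedEmbedding K (ε : K) * ξ - mixedEmbedding K (β j : K) ∈ T (j + 1))
    (π : Fin t → Fin t)
    (h2 : ∀ (j : Fin t), ∀ ξ ∈ T j, ∃ γ : 𝓞 K,
      (∃ δ : 𝓞 K, mixedEmbedding.norm
          (mixedEmbedding K ((ε⁻¹ : (𝓞 K)ˣ) : K) * ξ - mixedEmbedding K (γ : K)
            - mixedEmbedding K (δ : K)) < k) ∨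
      mixedEmbedding K ((ε⁻¹ : (𝓞 K)ˣ) : K) * ξ - mixedEmbedding K (γ : K) ∈ T (π j)) :
    (∀ ξ₀ ∈ T 0,
      (∀ γ : 𝓞 K, k ≤ mixedEmbedding.norm (ξ₀ - mixedEmbedding K (γ : K))) →
      ξ₀ = mixedEmbedding K ((∑ j : Fin t, (ε : 𝓞 K) ^ (t - 1 - (j : ℕ)) * β j : 𝓞 K) : K)
        / (mixedEmbedding K (ε : K) ^ t - 1)) ∧
    (∀ (j : Fin t), ∀ ξ ∈ T j,
      (∀ γ : 𝓞 K, k ≤ mixedEmbedding.norm (ξ - mixedEmbedding K (γ : K))) →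
      ∃ (m : ℤ) (γ : 𝓞 K),
        ξ = mixedEmbedding K ((ε : K) ^ m) *
            (mixedEmbedding K ((∑ j : Fin t, (ε : 𝓞 K) ^ (t - 1 - (j : ℕ)) * β j : 𝓞 K) : K)
              / (mixedEmbedding K (ε : K) ^ t - 1))
          - mixedEmbedding K (γ : K)) := by
  have hne : ∀ p : PF K, ‖pf p (mixedEmbedding K (ε : K))‖ ≠ 1 := by
    intro p
    cases p with
    | inl w =>
        rw [pf_inl, Complex.norm_real, Real.norm_eq_abs]
        exact hεabs.1 w
    | inr w =>
        rw [pf_inr]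
        exact hεabs.2 w
  have hcz := csum_zero_t ε (t := t) β
  -- Part 1
  have key : ∀ ξ₀ ∈ T 0,
      (∀ γ : 𝓞 K, k ≤ mixedEmbedding.norm (ξ₀ - mixedEmbedding K (γ : K))) →
      ξ₀ = mixedEmbedding K ((∑ j : Fin t, (ε : 𝓞 K) ^ (t - 1 - (j : ℕ)) * β j : 𝓞 K) : K)
        / (mixedEmbedding K (ε : K) ^ t - 1) := by
    intro ξ₀ hξ₀ hexc
    have he : Exc k ξ₀ := hexc
    apply pf_ext
    intro p
    have hmv := main_val k ε T β π h2 hT h1 hne hξ₀ he p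
    rw [hcz] at hmv
    rw [hmv, pf_div, map_sub, map_pow, map_one]
  refine ⟨key, ?_⟩
  -- Part 2
  intro j ξ hξ hexc
  have he : Exc k ξ := hexc
  have hKinv : ((ε⁻¹ : (𝓞 K)ˣ) : K) * (ε : K) = 1 := by
    have h𝓞 : ((ε⁻¹ : (𝓞 K)ˣ) : 𝓞 K) * (ε : 𝓞 K) = 1 := ε.inv_mul
    calc ((ε⁻¹ : (𝓞 K)ˣ) : K) * (ε : K)
        = ((((ε⁻¹ : (𝓞 K)ˣ) : 𝓞 K) * (ε : 𝓞 K) : 𝓞 K) : K) := by push_cast; ring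
      _ = 1 := by rw [h𝓞]; push_cast; ring
  have hεK : (ε : K) ≠ 0 := by
    intro h
    rw [h, mul_zero] at hKinv
    exact zero_ne_one hKinv
  have hinvK : (((ε⁻¹ : (𝓞 K)ˣ) : 𝓞 K) : K) = (ε : K)⁻¹ := eq_inv_of_mul_eq_one_left hKinv
  set n : ℕ := t - (j : ℕ) with hn
  have hjn : j + ((n : ℕ) : Fin t) = 0 := by
    have hle : (j : ℕ) ≤ t := le_of_lt j.isLt
    rw [hn, Nat.cast_sub hle, Fin.natCast_self, Fin.cast_val_eq_self]
    ring
  have hy := fpt_mem k ε T β h1 hξ he n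
  rw [hjn] at hy
  have hyζ := key _ hy.1 hy.2
  simp only [fpt] at hyζ
  refine ⟨-(n : ℤ), -(((ε⁻¹ : (𝓞 K)ˣ) : 𝓞 K) ^ n * csum ε β j n), ?_⟩
  have hzp : (ε : K) ^ (-(n : ℤ)) = ((ε : K) ^ n)⁻¹ := by rw [zpow_neg, zpow_natCast]
  have hγc : ((-(((ε⁻¹ : (𝓞 K)ˣ) : 𝓞 K) ^ n * csum ε β j n) : 𝓞 K) : K)
      = -(((ε : K) ^ n)⁻¹ * ((csum ε β j n : 𝓞 K) : K)) := by
    push_cast [hinvK, inv_pow]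
    ring
  rw [hzp, hγc, map_neg, sub_neg_eq_add, map_mul]
  have hinvE : mixedEmbedding K (((ε : K) ^ n)⁻¹) * (mixedEmbedding K (ε : K)) ^ n = 1 := by
    rw [← map_pow (mixedEmbedding K) ((ε : K)) n, ← map_mul,
      inv_mul_cancel₀ (pow_ne_zero n hεK), map_one]
  have hsub := sub_eq_iff_eq_add.mp hyζ
  calc ξ = 1 * ξ := (one_mul ξ).symm
    _ = (mixedEmbedding K (((ε : K) ^ n)⁻¹) * (mixedEmbedding K (ε : K)) ^ n) * ξ := by
        rw [hinvE]
    _ = mixedEmbedding K (((ε : K) ^ n)⁻¹) * ((mixedEmbedding K (ε : K)) ^ n * ξ) := by ring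
    _ = mixedEmbedding K (((ε : K) ^ n)⁻¹) *
        (mixedEmbedding K ((∑ j : Fin t, (ε : 𝓞 K) ^ (t - 1 - (j : ℕ)) * β j : 𝓞 K) : K)
            / (mixedEmbedding K (ε : K) ^ t - 1)
          + mixedEmbedding K ((csum ε β j n : 𝓞 K) : K)) := by rw [← hsub]
    _ = _ := by ring
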